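/- Every feasible list is consistent: if there exists a tangle ⟨id_n = π_1, …, π_h⟩ realizing L, then the map id_n L is a permutation of [n]. -/
import Mathlib


open Finset

/-- Two permutations are adjacent if every element's position changes by at most one. -/
def Adjacent {n : ℕ} (π σ : Equiv.Perm (Fin n)) : Prop :=
  ∀ i, ((π i : ℤ) - (σ i : ℤ)).natAbs ≤ 1

/-- Number of times wires `i` and `j` swap in the sequence `T` of height `h`. -/
def SwapCount {n : ℕ} (T : ℕ → Equiv.Perm (Fin n)) (h : ℕ) (i j : Fin n) : ℕ :=
  ((Finset.range (h - 1)).filter fun t => T t i = T (t+1) j ∧ T t j = T (t+1) i).card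

/-- A tangle of height `h`: a nonempty sequence of permutations with consecutive ones adjacent. -/
def IsTangle {n : ℕ} (T : ℕ → Equiv.Perm (Fin n)) (h : ℕ) : Prop :=
  1 ≤ h ∧ ∀ t, t + 1 < h → Adjacent (T t) (T (t+1))

/-- A tangle starting at the identity realizing the list `l`. -/
def Realizes {n : ℕ} (T : ℕ → Equiv.Perm (Fin n)) (h : ℕ) (l : Fin n → Fin n → ℕ) : Prop :=
  IsTangle T h ∧ T 0 = 1 ∧ ∀ i j, i ≠ j → SwapCount T h i j = l i j

/-- A list is feasible if some tangle starting at the identity realizes it. -/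
def Feasible {n : ℕ} (l : Fin n → Fin n → ℕ) : Prop :=
  ∃ h T, Realizes T h l

/-- A list is consistent if the map `id_n L` is a permutation of `[n]`. -/
def Consistent {n : ℕ} (l : Fin n → Fin n → ℕ) : Prop :=
  ∃ ρ : Equiv.Perm (Fin n), ∀ i : Fin n,
    ((i : ℤ) + ((Finset.univ.filter fun j => i < j ∧ Odd (l i j)).card : ℤ)
      - ((Finset.univ.filter fun j => j < i ∧ Odd (l i j)).card : ℤ)) = (ρ i : ℤ)

/-- Every feasible list is consistent. -/
lemma swap_iff {n : ℕ} {π σ : Equiv.Perm (Fin n)} (hadj : Adjacent π σ) {i j : Fin n}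
    (hij : i ≠ j) :
    (π i = σ j ∧ π j = σ i) ↔ ¬(π i < π j ↔ σ i < σ j) := by
  have h1 := hadj i
  have h2 := hadj j
  have e1 : π i ≠ π j := fun h => hij (π.injective h)
  have e2 : σ i ≠ σ j := fun h => hij (σ.injective h)
  simp only [Fin.lt_def, Fin.ext_iff, ne_eq] at *
  omega

lemma parity_lemma {n : ℕ} {T : ℕ → Equiv.Perm (Fin n)} {h : ℕ} (hTan : IsTangle T h)
    (hT0 : T 0 = 1) {i j : Fin n} (hij : i ≠ j) :
    ∀ t, t ≤ h - 1 →
      (Odd ((Finset.range t).filter fun s => T s i = T (s+1) j ∧ T s j = T (s+1) i).card ↔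
        ¬(T t i < T t j ↔ i < j)) := by
  intro t
  induction t with
  | zero => intro _; simp [hT0]
  | succ t ih =>
    intro ht
    have hlt : t + 1 < h := by have := hTan.1; omega
    have hswap := swap_iff (hTan.2 t hlt) hij
    have ihh := ih (by omega)
    rw [Finset.range_add_one, Finset.filter_insert]
    by_cases hc : T t i = T (t+1) j ∧ T t j = T (t+1) i
    · rw [if_pos hc, Finset.card_insert_of_notMem (by simp), Nat.odd_add_one, ihh, not_not]
      have hpq := hswap.mp hc
      clear hswap hc ih hTan hT0 ht hlt hij
      tauto
    · rw [if_neg hc, ihh]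
      have hpq := not_not.mp (mt hswap.mpr hc)
      rw [← hpq]

lemma card_lt_perm {n : ℕ} (ρ : Equiv.Perm (Fin n)) (i : Fin n) :
    (Finset.univ.filter fun j => ρ j < ρ i).card = (ρ i : ℕ) := by
  have himg : (Finset.univ.filter fun x => x < ρ i).image ρ.symm
      = Finset.univ.filter fun j => ρ j < ρ i := by
    ext j
    simp only [Finset.mem_image, Finset.mem_filter, Finset.mem_univ, true_and]
    constructor
    · rintro ⟨a, ha, rfl⟩; simpa using ha
    · intro hj; exact ⟨ρ j, hj, ρ.symm_apply_apply j⟩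
  rw [← himg, Finset.card_image_of_injective _ ρ.symm.injective]
  have : (Finset.univ.filter fun x => x < ρ i) = Finset.Iio (ρ i) := by
    ext x; simp
  rw [this, Fin.card_Iio]

theorem feasible_consistent' (n : ℕ) (l : Fin n → Fin n → ℕ)
    (hfeas : ∃ h T, (IsTangle T h ∧ T 0 = 1 ∧ ∀ i j, i ≠ j → SwapCount T h i j = l i j)) :
    ∃ ρ : Equiv.Perm (Fin n), ∀ i : Fin n,
    ((i : ℤ) + ((Finset.univ.filter fun j => i < j ∧ Odd (l i j)).card : ℤ)
      - ((Finset.univ.filter fun j => j < i ∧ Odd (l i j)).card : ℤ)) = (ρ i : ℤ) := by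
  obtain ⟨h, T, hTan, hT0, hl⟩ := hfeas
  set ρ := T (h - 1) with hρ
  refine ⟨ρ, fun i => ?_⟩
  -- characterization of Odd (l i j)
  have hodd : ∀ j : Fin n, i ≠ j → (Odd (l i j) ↔ ¬(ρ i < ρ j ↔ i < j)) := by
    intro j hij
    rw [← hl i j hij]
    exact parity_lemma ⟨hTan.1, hTan.2⟩ hT0 hij (h - 1) le_rfl
  -- rewrite the two filters
  have hA : (Finset.univ.filter fun j => i < j ∧ Odd (l i j))
      = Finset.univ.filter fun j => i < j ∧ ρ j < ρ i := by
    apply Finset.filter_congr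
    intro j _
    by_cases hij : i < j
    · have hne : i ≠ j := ne_of_lt hij
      have := hodd j hne
      have hρne : ρ i ≠ ρ j := fun e => hne (ρ.injective e)
      simp only [hij, true_and]
      rw [this]
      constructor
      · intro hnot
        rcases lt_trichotomy (ρ j) (ρ i) with h' | h' | h'
        · exact h'
        · exact absurd h' hρne.symm
        · exact absurd (iff_of_true h' hij) hnot
      · intro h' hiff
        exact absurd (hiff.mpr hij) (not_lt.mpr h'.le)
    · simp [hij]
  have hB : (Finset.univ.filter fun j => j < i ∧ Odd (l i j))
      = Finset.univ.filter fun j => j < i ∧ ρ i < ρ j := by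
    apply Finset.filter_congr
    intro j _
    by_cases hij : j < i
    · have hne : i ≠ j := (ne_of_lt hij).symm
      have := hodd j hne
      have hρne : ρ i ≠ ρ j := fun e => hne (ρ.injective e)
      simp only [hij, true_and]
      rw [this]
      constructor
      · intro hnot
        rcases lt_trichotomy (ρ i) (ρ j) with h' | h' | h'
        · exact h'
        · exact absurd h' hρne
        · exact absurd (iff_of_false (not_lt.mpr h'.le) (not_lt.mpr hij.le)) hnot
      · intro h' hiff
        exact absurd (hiff.mp h') (not_lt.mpr hij.le)
    · simp [hij]
  rw [hA, hB]
  -- counting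
  have key1 : (Finset.univ.filter fun j => ρ j < ρ i).card = (ρ i : ℕ) := card_lt_perm ρ i
  have key2 : (Finset.univ.filter fun j => (j:Fin n) < i).card = (i : ℕ) := by
    have : (Finset.univ.filter fun j => (j:Fin n) < i) = Finset.Iio i := by ext x; simp
    rw [this, Fin.card_Iio]
  -- split key1 by j < i / ¬(j < i)
  have split1 : (Finset.univ.filter fun j => ρ j < ρ i).card
      = (Finset.univ.filter fun j => j < i ∧ ρ j < ρ i).card
        + (Finset.univ.filter fun j => i < j ∧ ρ j < ρ i).card := by
    rw [← Finset.card_filter_add_card_filter_not (s := Finset.univ.filter fun j => ρ j < ρ i)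
      (p := fun j => j < i)]
    congr 1
    · rw [Finset.filter_filter]
      congr 1; ext j; simp [and_comm]
    · rw [Finset.filter_filter]
      congr 1; ext j
      simp only [Finset.mem_filter, Finset.mem_univ, true_and]
      constructor
      · rintro ⟨h1, h2⟩
        refine ⟨lt_of_le_of_ne (not_lt.mp h2) ?_, h1⟩
        intro e; exact absurd (e ▸ h1) (lt_irrefl _)
      · rintro ⟨h1, h2⟩; exact ⟨h2, not_lt.mpr h1.le⟩
  have split2 : (Finset.univ.filter fun j => (j:Fin n) < i).card
      = (Finset.univ.filter fun j => j < i ∧ ρ j < ρ i).card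
        + (Finset.univ.filter fun j => j < i ∧ ρ i < ρ j).card := by
    rw [← Finset.card_filter_add_card_filter_not (s := Finset.univ.filter fun j => (j:Fin n) < i)
      (p := fun j => ρ j < ρ i)]
    congr 1
    · rw [Finset.filter_filter]
    · rw [Finset.filter_filter]
      congr 1; ext j
      simp only [Finset.mem_filter, Finset.mem_univ, true_and]
      constructor
      · rintro ⟨h1, h2⟩
        refine ⟨h1, lt_of_le_of_ne (not_lt.mp h2) ?_⟩
        intro e; exact (ne_of_lt h1) (ρ.injective e).symm
      · rintro ⟨h1, h2⟩; exact ⟨h1, not_lt.mpr h2.le⟩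
  omega

theorem feasible_consistent (n : ℕ) (l : Fin n → Fin n → ℕ) (hfeas : Feasible l) :
    Consistent l := by
  obtain ⟨h, T, hTan, hT0, hl⟩ := hfeas
  exact feasible_consistent' n l ⟨h, T, hTan, hT0, hl⟩
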